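/- Let Q*₁,…,Q*_k be probability measures on (𝒳,𝒜) with densities q*₁,…,q*_k with respect to a σ-finite measure μ, set Q*_Σ = Q*₁ + ⋯ + Q*_k, let α ∈ 𝒲_k with αᵢ > 0 for all i, and let f^α be the Bayes predictor, f^α_i(x) = αᵢ q*ᵢ(x) / ∑_{j=1}^k αⱼ q*ⱼ(x) (defined on the support of P_α = ∑ⱼ αⱼ Q*ⱼ). Then the measures f^α₁·Q*_Σ, …, f^α_k·Q*_Σ are linearly independent in the space of finite signed measures if and only if Q*₁,…,Q*_k are linearly independent. -/

import Mathlib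

open MeasureTheory Real
open scoped ENNReal

noncomputable section

variable {𝒳 : Type*} [MeasurableSpace 𝒳]

/-- Squared Hellinger distance between two measures. -/
def hellingerSq (P Q : Measure 𝒳) : ℝ :=
  (1 / 2) * ∫ x, (Real.sqrt ((P.rnDeriv (P + Q) x).toReal)
      - Real.sqrt ((Q.rnDeriv (P + Q) x).toReal)) ^ 2 ∂(P + Q)

/-- Hellinger distance between two measures. -/
def hellinger (P Q : Measure 𝒳) : ℝ := Real.sqrt (hellingerSq P Q)

/-- Hellinger distance between two weight vectors. -/
def hellingerVec {k : ℕ} (w w' : Fin k → ℝ) : ℝ :=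
  Real.sqrt ((1 / 2) * ∑ i, (Real.sqrt (w i) - Real.sqrt (w' i)) ^ 2)

/-- Total variation distance. -/
def tvDist (P Q : Measure 𝒳) : ℝ :=
  ⨆ s : { s : Set 𝒳 // MeasurableSet s }, |(P s.1).toReal - (Q s.1).toReal|

/-- Mixture of measures with real weights. -/
def mix {k : ℕ} (β : Fin k → ℝ) (Q : Fin k → Measure 𝒳) : Measure 𝒳 :=
  ∑ i, ENNReal.ofReal (β i) • Q i

/-- Linear independence of finite measures, viewed in the real vector space of
finite signed measures: the only real linear combination vanishing on every
measurable set is the trivial one. -/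
def MeasLinIndep {k : ℕ} (F : Fin k → Measure 𝒳) : Prop :=
  ∀ c : Fin k → ℝ, (∀ s : Set 𝒳, MeasurableSet s → ∑ i, c i * (F i s).toReal = 0) → c = 0

/-- The constant Δ*(F₁,…,F_k). -/
def Δstar {k : ℕ} (F : Fin k → Measure 𝒳) : ℝ :=
  ⨅ I : { I : Finset (Fin k) // I.Nonempty ∧ I ≠ Finset.univ },
    ⨅ γ : { γ : Fin k → ℝ // (∀ i, 0 ≤ γ i) ∧ ∑ i ∈ I.1, γ i = 1 },
      ⨅ l : { l : Fin k → ℝ // (∀ i, 0 ≤ l i) ∧ ∑ i ∈ I.1ᶜ, l i = 1 },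
        tvDist (∑ i ∈ I.1, ENNReal.ofReal (γ.1 i) • F i)
          (∑ i ∈ I.1ᶜ, ENNReal.ofReal (l.1 i) • F i)

/-- ψ(√r) where ψ(x) = (x−1)/(x+1), with ψ(√∞) = 1. -/
def ψρ (r : ℝ≥0∞) : ℝ :=
  if r = ⊤ then 1 else (Real.sqrt r.toReal - 1) / (Real.sqrt r.toReal + 1)

/-- Ratio b/a in [0,∞] with conventions 0/0 = 1 and a/0 = ∞ for a > 0. -/
def densRatio (a b : ℝ) : ℝ≥0∞ :=
  if a = 0 ∧ b = 0 then 1 else ENNReal.ofReal b / ENNReal.ofReal a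

/-- The statistic T(x,q,q') = ∑ᵢ ψ(√(q'(xᵢ)/q(xᵢ))). -/
def Tρ {n : ℕ} (x : Fin n → 𝒳) (q q' : 𝒳 → ℝ) : ℝ :=
  ∑ i, ψρ (densRatio (q (x i)) (q' (x i)))

/-- The rational points of the simplex, 𝒲_k ∩ ℚ^k. -/
def ratSimplex (k : ℕ) : Set (Fin k → ℝ) :=
  { β | β ∈ stdSimplex ℝ (Fin k) ∧ ∀ i, ∃ r : ℚ, β i = (r : ℝ) }

/-- Mixture density ∑ⱼ βⱼ qⱼ. -/
def mixDens {k : ℕ} (q : Fin k → 𝒳 → ℝ) (β : Fin k → ℝ) : 𝒳 → ℝ :=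
  fun x => ∑ j, β j * q j x

/-- Υ(x,p) = sup over the model ℳ_mix(q₁,…,q_k) of T(x,p,·). -/
def Υρ {n k : ℕ} (q : Fin k → 𝒳 → ℝ) (x : Fin n → 𝒳) (p : 𝒳 → ℝ) : ℝ :=
  ⨆ β : ratSimplex k, Tρ x p (mixDens q β.1)

/-- The set 𝓔(x) of candidate ρ-estimators on the model ℳ_mix(q₁,…,q_k). -/
def rhoEstSet {n k : ℕ} (μ : Measure 𝒳) (q : Fin k → 𝒳 → ℝ) (x : Fin n → 𝒳) :
    Set (Measure 𝒳) :=
  { P | ∃ β ∈ ratSimplex k,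
      P = μ.withDensity (fun y => ENNReal.ofReal (mixDens q β y)) ∧
      Υρ q x (mixDens q β) < (⨅ β' : ratSimplex k, Υρ q x (mixDens q β'.1)) + 11.36 }

/-- Closure of a set of measures with respect to the Hellinger distance. -/
def hellClosure (S : Set (Measure 𝒳)) : Set (Measure 𝒳) :=
  { P | ∀ ε > 0, ∃ Q ∈ S, hellinger P Q < ε }

/-- The Bayes predictor associated with weights α and densities q. -/
def bayesPred {k : ℕ} (α : Fin k → ℝ) (q : Fin k → 𝒳 → ℝ) : 𝒳 → Fin k → ℝ :=
  fun x i => α i * q i x / ∑ j, α j * q j x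

/-- The joint distribution Π*_α on 𝒳 × [k] with ℙ(Y = i) = αᵢ and law of X given
Y = i equal to Q i. -/
def jointLaw {k : ℕ} (α : Fin k → ℝ) (Q : Fin k → Measure 𝒳) : Measure (𝒳 × Fin k) :=
  ∑ i, ENNReal.ofReal (α i) • ((Q i).prod (Measure.dirac i))

/-- Marginal calibration: fᵢ(X) = 𝔼[1_{Y=i} | fᵢ(X)] a.s. for all i. -/
def MarginallyCalibrated {k : ℕ} (f : 𝒳 → Fin k → ℝ) (Pm : Measure (𝒳 × Fin k)) : Prop :=
  ∀ i, (fun ω : 𝒳 × Fin k => f ω.1 i)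
    =ᵐ[Pm] Pm[(fun ω : 𝒳 × Fin k => if ω.2 = i then (1 : ℝ) else 0) |
        MeasurableSpace.comap (fun ω : 𝒳 × Fin k => f ω.1 i) inferInstance]

/-- Canonical calibration: fᵢ(X) = 𝔼[1_{Y=i} | f(X)] a.s. for all i. -/
def CanonicallyCalibrated {k : ℕ} (f : 𝒳 → Fin k → ℝ) (Pm : Measure (𝒳 × Fin k)) : Prop :=
  ∀ i, (fun ω : 𝒳 × Fin k => f ω.1 i)
    =ᵐ[Pm] Pm[(fun ω : 𝒳 × Fin k => if ω.2 = i then (1 : ℝ) else 0) |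
        MeasurableSpace.comap (fun ω : 𝒳 × Fin k => f ω.1) inferInstance]

open scoped Classical in
/-- Kullback–Leibler divergence. -/
def klDiv' (P Q : Measure 𝒳) : EReal :=
  if P ≪ Q ∧ Integrable (fun x => Real.log ((P.rnDeriv Q x).toReal)) P
  then ((∫ x, Real.log ((P.rnDeriv Q x).toReal) ∂P : ℝ) : EReal)
  else ⊤

end

section

variable {𝒳 : Type*} [MeasurableSpace 𝒳]


private lemma combo_setIntegral_zero_iff' {𝒳 : Type*} [MeasurableSpace 𝒳] {k : ℕ}
    (μ : Measure 𝒳) (g : Fin k → 𝒳 → ℝ) (hgi : ∀ i, Integrable (g i) μ)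
    (c : Fin k → ℝ) :
    (∀ s : Set 𝒳, MeasurableSet s → ∑ i, c i * ∫ x in s, g i x ∂μ = 0) ↔
      (fun x => ∑ i, c i * g i x) =ᵐ[μ] 0 := by
  have hswap : ∀ s : Set 𝒳, ∑ i, c i * ∫ x in s, g i x ∂μ
      = ∫ x in s, ∑ i, c i * g i x ∂μ := by
    intro s
    rw [integral_finset_sum _ fun i _ => ((hgi i).const_mul (c i)).integrableOn]
    simp_rw [integral_const_mul]
  constructor
  · intro h
    have hint : Integrable (fun x => ∑ i, c i * g i x) μ :=
      integrable_finset_sum _ fun i _ => (hgi i).const_mul (c i)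
    refine hint.ae_eq_zero_of_forall_setIntegral_eq_zero fun s hs _ => ?_
    rw [← hswap]; exact h s hs
  · intro h s hs
    rw [hswap]
    exact integral_eq_zero_of_ae (ae_restrict_of_ae h)

-- STATEMENT 12
theorem statement12 {k : ℕ} (hk : 2 ≤ k)
    (Qstar : Fin k → Measure 𝒳) [∀ i, IsProbabilityMeasure (Qstar i)]
    (μ : Measure 𝒳) [SigmaFinite μ]
    (qstar : Fin k → 𝒳 → ℝ) (hq_meas : ∀ i, Measurable (qstar i))
    (hq_nonneg : ∀ i x, 0 ≤ qstar i x)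
    (hQq : ∀ i, Qstar i = μ.withDensity fun x => ENNReal.ofReal (qstar i x))
    (α : Fin k → ℝ) (hα : α ∈ stdSimplex ℝ (Fin k)) (hαpos : ∀ i, 0 < α i) :
    (MeasLinIndep fun i =>
        (∑ j, Qstar j).withDensity fun x => ENNReal.ofReal (bayesPred α qstar x i))
      ↔ MeasLinIndep Qstar := by
  classical
  haveI : Nonempty (Fin k) := ⟨⟨0, by omega⟩⟩
  obtain ⟨hα0, hα1⟩ := hα
  set S : 𝒳 → ℝ := fun x => ∑ j, α j * qstar j x with hS
  set G : 𝒳 → ℝ := fun x => ∑ j, qstar j x with hG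
  have hSx : ∀ x, ∑ j, α j * qstar j x = S x := fun x => rfl
  have hGx : ∀ x, ∑ j, qstar j x = G x := fun x => rfl
  set ε : ℝ := Finset.univ.inf' Finset.univ_nonempty α with hε
  have hεpos : 0 < ε := by
    rw [hε, Finset.lt_inf'_iff]
    exact fun i _ => hαpos i
  have hεle : ∀ i, ε ≤ α i := fun i => Finset.inf'_le _ (Finset.mem_univ i)
  have hαle1 : ∀ i, α i ≤ 1 := by
    intro i
    rw [← hα1]
    exact Finset.single_le_sum (fun j _ => hα0 j) (Finset.mem_univ i)
  have hε1 : ε ≤ 1 := le_trans (hεle ⟨0, by omega⟩) (hαle1 _)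
  have hSnonneg : ∀ x, 0 ≤ S x :=
    fun x => Finset.sum_nonneg fun j _ => mul_nonneg (hα0 j) (hq_nonneg j x)
  have hGnonneg : ∀ x, 0 ≤ G x := fun x => Finset.sum_nonneg fun j _ => hq_nonneg j x
  have hSG : ∀ x, S x ≤ G x := by
    intro x
    refine Finset.sum_le_sum fun j _ => ?_
    nlinarith [hαle1 j, hq_nonneg j x, hα0 j]
  have hεG : ∀ x, ε * G x ≤ S x := by
    intro x
    rw [← hGx, ← hSx, Finset.mul_sum]
    exact Finset.sum_le_sum fun j _ => mul_le_mul_of_nonneg_right (hεle j) (hq_nonneg j x)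
  have hS0 : ∀ x, S x = 0 → ∀ j, qstar j x = 0 := by
    intro x hx j
    have h := (Finset.sum_eq_zero_iff_of_nonneg
      (fun j (_ : j ∈ Finset.univ) => mul_nonneg (hα0 j) (hq_nonneg j x))).mp hx j
      (Finset.mem_univ j)
    rcases mul_eq_zero.mp h with h | h
    · exact absurd h (hαpos j).ne'
    · exact h
  set h' : 𝒳 → ℝ := fun x => if S x = 0 then 1 else G x / S x with hh'
  have hSmeas : Measurable S := Finset.measurable_sum _ fun j _ => measurable_const.mul (hq_meas j)
  have hGmeas : Measurable G := Finset.measurable_sum _ fun j _ => hq_meas j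
  have hh'meas : Measurable h' :=
    Measurable.ite (hSmeas (measurableSet_singleton 0)) measurable_const (hGmeas.div hSmeas)
  have hh'pos : ∀ x, 0 < h' x := by
    intro x
    rw [hh']
    by_cases hx : S x = 0
    · simp [hx]
    · simp only [hx, if_false]
      have hSpos : 0 < S x := lt_of_le_of_ne (hSnonneg x) (Ne.symm hx)
      exact div_pos (lt_of_lt_of_le hSpos (hSG x)) hSpos
  have hh'le : ∀ x, h' x ≤ ε⁻¹ := by
    intro x
    rw [hh']
    by_cases hx : S x = 0
    · simp only [hx, if_true]
      exact (one_le_inv₀ hεpos).mpr hε1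
    · simp only [hx, if_false]
      have hSpos : 0 < S x := lt_of_le_of_ne (hSnonneg x) (Ne.symm hx)
      rw [div_le_iff₀ hSpos]
      calc G x = ε⁻¹ * (ε * G x) := by field_simp
        _ ≤ ε⁻¹ * S x := mul_le_mul_of_nonneg_left (hεG x) (inv_nonneg.mpr hεpos.le)
  have hq_int : ∀ i, Integrable (qstar i) μ := by
    intro i
    refine ⟨(hq_meas i).aestronglyMeasurable, ?_⟩
    rw [hasFiniteIntegral_iff_ofReal (ae_of_all _ (hq_nonneg i))]
    have huniv : ∫⁻ x, ENNReal.ofReal (qstar i x) ∂μ = Qstar i Set.univ := by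
      rw [hQq i, withDensity_apply _ MeasurableSet.univ, Measure.restrict_univ]
    rw [huniv]
    exact measure_lt_top _ _
  set d : Fin k → 𝒳 → ℝ := fun i x => α i * h' x * qstar i x with hd
  have hd_nonneg : ∀ i x, 0 ≤ d i x :=
    fun i x => mul_nonneg (mul_nonneg (hα0 i) (hh'pos x).le) (hq_nonneg i x)
  have hd_meas : ∀ i, Measurable (d i) :=
    fun i => (measurable_const.mul hh'meas).mul (hq_meas i)
  have hd_int : ∀ i, Integrable (d i) μ := by
    intro i
    refine Integrable.mono' ((hq_int i).const_mul ε⁻¹)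
      (hd_meas i).aestronglyMeasurable (ae_of_all _ fun x => ?_)
    rw [Real.norm_eq_abs, abs_of_nonneg (hd_nonneg i x)]
    calc α i * h' x * qstar i x ≤ 1 * (ε⁻¹ * qstar i x) := by
          rw [mul_assoc]
          exact mul_le_mul (hαle1 i)
            (mul_le_mul_of_nonneg_right (hh'le x) (hq_nonneg i x))
            (mul_nonneg (hh'pos x).le (hq_nonneg i x)) one_pos.le
      _ = ε⁻¹ * qstar i x := one_mul _
  have hQsum : (∑ j, Qstar j) = μ.withDensity fun x => ENNReal.ofReal (G x) := by
    ext s hs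
    rw [Measure.finset_sum_apply, withDensity_apply _ hs]
    have : ∀ j ∈ Finset.univ, Qstar j s = ∫⁻ x in s, ENNReal.ofReal (qstar j x) ∂μ := by
      intro j _
      rw [hQq j, withDensity_apply _ hs]
    rw [Finset.sum_congr rfl this, ← lintegral_finset_sum _ fun j _ => (hq_meas j).ennreal_ofReal]
    refine lintegral_congr fun x => ?_
    rw [← ENNReal.ofReal_sum_of_nonneg fun j _ => hq_nonneg j x, hGx]
  have hF : ∀ (i : Fin k) (s : Set 𝒳), MeasurableSet s →
      ((∑ j, Qstar j).withDensity fun x => ENNReal.ofReal (bayesPred α qstar x i)) s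
        = ∫⁻ x in s, ENNReal.ofReal (d i x) ∂μ := by
    intro i s hs
    have hbmeas : Measurable fun x => ENNReal.ofReal (bayesPred α qstar x i) := by
      unfold bayesPred
      exact Measurable.ennreal_ofReal (by fun_prop)
    rw [withDensity_apply _ hs, hQsum, restrict_withDensity hs,
      lintegral_withDensity_eq_lintegral_mul _ hGmeas.ennreal_ofReal hbmeas]
    refine lintegral_congr fun x => ?_
    simp only [Pi.mul_apply, bayesPred, hSx]
    by_cases hx : S x = 0
    · have hq0 := hS0 x hx i
      simp [hd, hq0, hx]
    · have hSpos : 0 < S x := lt_of_le_of_ne (hSnonneg x) (Ne.symm hx)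
      rw [← ENNReal.ofReal_mul (hGnonneg x)]
      congr 1
      rw [hd]
      simp only [hh', hx, if_false]
      field_simp

  have hFtoReal : ∀ (i : Fin k) (s : Set 𝒳), MeasurableSet s →
      (((∑ j, Qstar j).withDensity fun x => ENNReal.ofReal (bayesPred α qstar x i)) s).toReal
        = ∫ x in s, d i x ∂μ := by
    intro i s hs
    rw [hF i s hs, integral_eq_lintegral_of_nonneg_ae (ae_of_all _ fun x => hd_nonneg i x)
      (hd_meas i).aestronglyMeasurable]
  have hQtoReal : ∀ (i : Fin k) (s : Set 𝒳), MeasurableSet s →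
      ((Qstar i) s).toReal = ∫ x in s, qstar i x ∂μ := by
    intro i s hs
    rw [hQq i, withDensity_apply _ hs, integral_eq_lintegral_of_nonneg_ae
      (ae_of_all _ fun x => hq_nonneg i x) (hq_meas i).aestronglyMeasurable]
  have keyF : ∀ c : Fin k → ℝ,
      (∀ s : Set 𝒳, MeasurableSet s → ∑ i, c i *
        ((((∑ j, Qstar j).withDensity fun x => ENNReal.ofReal (bayesPred α qstar x i)) s)).toReal
          = 0) ↔
        (fun x => ∑ i, (c i * α i) * qstar i x) =ᵐ[μ] 0 := by
    intro c
    have hcond : (∀ s : Set 𝒳, MeasurableSet s → ∑ i, c i *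
        ((((∑ j, Qstar j).withDensity fun x => ENNReal.ofReal (bayesPred α qstar x i)) s)).toReal
          = 0) ↔
        (∀ s : Set 𝒳, MeasurableSet s → ∑ i, c i * ∫ x in s, d i x ∂μ = 0) := by
      refine forall_congr' fun s => ?_
      refine imp_congr_right fun hs => ?_
      have heq : ∀ i : Fin k,
          (((∑ j, Qstar j).withDensity fun x => ENNReal.ofReal (bayesPred α qstar x i)) s).toReal
            = ∫ x in s, d i x ∂μ := fun i => hFtoReal i s hs
      simp_rw [heq]
    rw [hcond, combo_setIntegral_zero_iff' μ d hd_int c]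
    have hpt : ∀ x, (∑ i, c i * d i x = 0) ↔ (∑ i, (c i * α i) * qstar i x = 0) := by
      intro x
      have hfac : ∑ i, c i * d i x = h' x * ∑ i, (c i * α i) * qstar i x := by
        rw [Finset.mul_sum]
        refine Finset.sum_congr rfl fun i _ => ?_
        rw [hd]; ring
      rw [hfac, mul_eq_zero]
      simp [(hh'pos x).ne']
    constructor
    · intro h
      filter_upwards [h] with x hx
      simpa using (hpt x).mp (by simpa using hx)
    · intro h
      filter_upwards [h] with x hx
      simpa using (hpt x).mpr (by simpa using hx)
  have keyQ : ∀ c : Fin k → ℝ,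
      (∀ s : Set 𝒳, MeasurableSet s → ∑ i, c i * ((Qstar i) s).toReal = 0) ↔
        (fun x => ∑ i, c i * qstar i x) =ᵐ[μ] 0 := by
    intro c
    have hcond : (∀ s : Set 𝒳, MeasurableSet s → ∑ i, c i * ((Qstar i) s).toReal = 0) ↔
        (∀ s : Set 𝒳, MeasurableSet s → ∑ i, c i * ∫ x in s, qstar i x ∂μ = 0) := by
      refine forall_congr' fun s => ?_
      refine imp_congr_right fun hs => ?_
      have heq : ∀ i : Fin k, ((Qstar i) s).toReal = ∫ x in s, qstar i x ∂μ :=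
        fun i => hQtoReal i s hs
      simp_rw [heq]
    rw [hcond, combo_setIntegral_zero_iff' μ qstar hq_int c]
  constructor
  · intro hFLI c hc
    have hae : (fun x => ∑ i, c i * qstar i x) =ᵐ[μ] 0 := (keyQ c).mp hc
    have hc' : (fun i => c i / α i) = 0 := by
      refine hFLI (fun i => c i / α i) ?_
      rw [keyF]
      have hfe : (fun x => ∑ i, (c i / α i * α i) * qstar i x)
          = fun x => ∑ i, c i * qstar i x := by
        funext x
        refine Finset.sum_congr rfl fun i _ => ?_
        rw [div_mul_cancel₀ _ (hαpos i).ne']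
      rw [hfe]
      exact hae
    funext i
    have h0 := congrFun hc' i
    simp only [Pi.zero_apply] at h0 ⊢
    rcases div_eq_zero_iff.mp h0 with h | h
    · exact h
    · exact absurd h (hαpos i).ne'
  · intro hQLI c hc
    have hae := (keyF c).mp hc
    have hc' : (fun i => c i * α i) = 0 := by
      refine hQLI (fun i => c i * α i) ?_
      rw [keyQ]
      exact hae
    funext i
    have h0 := congrFun hc' i
    simp only [Pi.zero_apply] at h0 ⊢
    rcases mul_eq_zero.mp h0 with h | h
    · exact h
    · exact absurd h (hαpos i).ne'


end
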